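/- The category Grphs of multigraphs with graph morphisms is balanced: every morphism that is both a monomorphism and an epimorphism is an isomorphism (i.e., has a two-sided inverse graph morphism). -/

import Mathlib

/-- A multigraph: a vertex type, an edge type, and an incidence function
assigning to each edge an unordered pair of vertices. -/
structure Multigraph : Type 1 where
  V : Type
  E : Type
  ψ : E → Sym2 V

namespace Multigraph

/-- The part set of a multigraph: vertices together with edges. -/
abbrev Part (G : Multigraph) : Type := G.V ⊕ G.E

/-- The incidence function extended to parts: a vertex `v` is incident to `{v,v}`. -/
def incid (G : Multigraph) : G.Part → Sym2 G.V
  | Sum.inl v => s(v, v)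
  | Sum.inr e => G.ψ e

/-- A graph morphism: a function on part sets mapping vertices to vertices and
preserving incidence.  (The vertex map is recorded separately, but it is uniquely
determined by the part map.) -/
@[ext]
structure Hom (G H : Multigraph) where
  partMap : G.Part → H.Part
  vertMap : G.V → H.V
  partMap_vert : ∀ v : G.V, partMap (Sum.inl v) = Sum.inl (vertMap v)
  incid_partMap : ∀ p : G.Part, H.incid (partMap p) = (G.incid p).map vertMap

/-- The identity graph morphism. -/
def Hom.id (G : Multigraph) : Hom G G where
  partMap := _root_.id
  vertMap := _root_.id
  partMap_vert := fun _ => rfl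
  incid_partMap := fun p => by simp

/-- Composition of graph morphisms. -/
def Hom.comp {G H K : Multigraph} (g : Hom H K) (f : Hom G H) : Hom G K where
  partMap := g.partMap ∘ f.partMap
  vertMap := g.vertMap ∘ f.vertMap
  partMap_vert := fun v => by simp [f.partMap_vert, g.partMap_vert]
  incid_partMap := fun p => by
    simp [Function.comp, g.incid_partMap, f.incid_partMap, Sym2.map_map]

/-- A strict graph morphism: a graph morphism that moreover maps edges to edges. -/
@[ext]
structure StrictHom (G H : Multigraph) extends Hom G H where
  edgeMap : G.E → H.E
  partMap_edge : ∀ e : G.E, partMap (Sum.inr e) = Sum.inr (edgeMap e)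

/-- The identity strict graph morphism. -/
def StrictHom.id (G : Multigraph) : StrictHom G G where
  toHom := Hom.id G
  edgeMap := _root_.id
  partMap_edge := fun _ => rfl

/-- Composition of strict graph morphisms. -/
def StrictHom.comp {G H K : Multigraph} (g : StrictHom H K) (f : StrictHom G H) :
    StrictHom G K where
  toHom := g.toHom.comp f.toHom
  edgeMap := g.edgeMap ∘ f.edgeMap
  partMap_edge := fun e => by
    simp [Hom.comp, f.partMap_edge, g.partMap_edge]

end Multigraph

namespace Multigraph

/-- The single-vertex graph. -/
def singleV : Multigraph := ⟨Unit, Empty, fun e => e.elim⟩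

/-- The morphism from the single-vertex graph picking a vertex. -/
def pick (A : Multigraph) (a : A.V) : Hom singleV A where
  partMap := fun _ => Sum.inl a
  vertMap := fun _ => a
  partMap_vert := fun _ => rfl
  incid_partMap := fun p => by
    cases p with
    | inl v => rfl
    | inr e => exact e.elim

/-- A graph with the vertices of `A` and a single edge with incidence `s`. -/
def oneEdge (A : Multigraph) (s : Sym2 A.V) : Multigraph := ⟨A.V, Unit, fun _ => s⟩

/-- The morphism from `oneEdge A s` to `A` sending the edge to a part `p`
with incidence `s`. -/
def toEdge (A : Multigraph) (s : Sym2 A.V) (p : A.Part) (hp : A.incid p = s) :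
    Hom (oneEdge A s) A where
  partMap := Sum.elim Sum.inl (fun _ => p)
  vertMap := _root_.id
  partMap_vert := fun _ => rfl
  incid_partMap := fun q => by
    cases q with
    | inl v => erw [Sum.elim_inl]; rfl
    | inr u => erw [Sum.elim_inr]; simpa [incid, oneEdge] using hp

/-- The complete multigraph on a type `X`. -/
def complete (X : Type) : Multigraph := ⟨X, Sym2 X, _root_.id⟩

/-- Any vertex function into `X` induces a morphism to the complete multigraph. -/
def toComplete (B : Multigraph) {X : Type} (fn : B.V → X) : Hom B (complete X) where
  partMap := Sum.elim (fun v => Sum.inl (fn v)) (fun e => Sum.inr ((B.ψ e).map fn))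
  vertMap := fn
  partMap_vert := fun _ => rfl
  incid_partMap := fun p => by
    cases p with
    | inl v => rfl
    | inr e => rfl

/-- The graph `B` with an extra parallel copy of the edge `ε`. -/
def double (B : Multigraph) (ε : B.E) : Multigraph :=
  ⟨B.V, B.E ⊕ Unit, Sum.elim B.ψ (fun _ => B.ψ ε)⟩

/-- The inclusion of `B` into its doubling. -/
def doubleIncl (B : Multigraph) (ε : B.E) : Hom B (B.double ε) where
  partMap := Sum.elim Sum.inl (fun e => Sum.inr (Sum.inl e))
  vertMap := _root_.id
  partMap_vert := fun _ => rfl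
  incid_partMap := fun p => by
    cases p with
    | inl v => simp [incid, double]
    | inr e => simp [incid, double]

open Classical in
/-- The inclusion of `B` into its doubling, redirecting `ε` to the new copy. -/
noncomputable def doubleIncl' (B : Multigraph) (ε : B.E) : Hom B (B.double ε) where
  partMap := Sum.elim Sum.inl
    (fun e => if e = ε then Sum.inr (Sum.inr ()) else Sum.inr (Sum.inl e))
  vertMap := _root_.id
  partMap_vert := fun _ => rfl
  incid_partMap := fun p => by
    cases p with
    | inl v => simp [incid, double]
    | inr e =>
      by_cases h : e = ε <;> simp [incid, double, h]

end Multigraph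

open Multigraph in
/-- The category **Grphs** is balanced: a morphism that is both a monomorphism and an
epimorphism is an isomorphism, i.e. has a two-sided inverse graph morphism. -/
theorem grphs_balanced (A B : Multigraph) (f : Hom A B)
    (hmono : ∀ (C : Multigraph) (g h : Hom C A), f.comp g = f.comp h → g = h)
    (hepi : ∀ (C : Multigraph) (g h : Hom B C), g.comp f = h.comp f → g = h) :
    ∃ g : Hom B A, g.comp f = Hom.id A ∧ f.comp g = Hom.id B := by
  classical
  -- vertMap is injective
  have hVinj : Function.Injective f.vertMap := by
    intro v1 v2 hv
    have hcomp : f.comp (pick A v1) = f.comp (pick A v2) := by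
      ext p
      · cases p with
        | inl u => simp [Hom.comp, pick, f.partMap_vert, hv]
        | inr e => exact e.elim
      · simp [Hom.comp, pick, hv]
    have := hmono _ _ _ hcomp
    exact congrArg (fun g => g.vertMap ()) this
  -- partMap is injective
  have hPinj : Function.Injective f.partMap := by
    intro p1 p2 hp
    have hincid : A.incid p2 = A.incid p1 := by
      apply Sym2.map.injective hVinj
      rw [← f.incid_partMap, ← f.incid_partMap, hp]
    have hcomp : f.comp (toEdge A (A.incid p1) p1 rfl) =
        f.comp (toEdge A (A.incid p1) p2 hincid) := by
      ext q
      · cases q with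
        | inl v => rfl
        | inr u => exact hp
      · rfl
    have := hmono _ _ _ hcomp
    have := congrArg (fun g => g.partMap (Sum.inr ())) this
    exact this
  -- vertMap is surjective
  have hVsurj : Function.Surjective f.vertMap := by
    have key : ∀ x : Sym2 A.V, ∀ b ∈ (x.map f.vertMap), ∃ v, f.vertMap v = b := by
      intro x
      induction x using Sym2.inductionOn with
      | hf a b =>
        intro c hc
        rw [Sym2.map_pair_eq, Sym2.mem_iff] at hc
        rcases hc with h | h
        · exact ⟨a, h.symm⟩
        · exact ⟨b, h.symm⟩
    have hcomp : (toComplete B (fun _ => True)).comp f =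
        (toComplete B (fun w => ∃ v, f.vertMap v = w)).comp f := by
      ext p
      · -- part maps
        show (toComplete B _).partMap (f.partMap p) = (toComplete B _).partMap (f.partMap p)
        have hmem : ∀ b ∈ B.incid (f.partMap p), ∃ v, f.vertMap v = b := by
          rw [f.incid_partMap]
          exact key _
        cases hq : f.partMap p with
        | inl w =>
          have hw : ∃ v, f.vertMap v = w := by
            apply hmem
            rw [hq]
            simp [incid]
          simp [toComplete, eq_true hw]
        | inr ε =>
          have : ∀ b ∈ B.ψ ε, ∃ v, f.vertMap v = b := by
            intro b hb
            apply hmem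
            rw [hq]
            exact hb
          simp only [toComplete, Sum.elim_inr, Sum.inr.injEq]
          generalize B.ψ ε = x at this ⊢
          induction x using Sym2.inductionOn with
          | hf a b =>
            have ha : ∃ v, f.vertMap v = a := this a (Sym2.mem_mk_left a b)
            have hb : ∃ v, f.vertMap v = b := this b (Sym2.mem_mk_right a b)
            rw [Sym2.map_pair_eq, Sym2.map_pair_eq, eq_true ha, eq_true hb]
      · -- vertex maps
        show True = _
        exact (eq_true ⟨‹A.V›, rfl⟩).symm
    have heq := hepi _ _ _ hcomp
    intro w
    have := congrArg (fun g => g.vertMap w) heq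
    simp only [toComplete] at this
    exact of_eq_true this.symm
  -- every edge of B is in the range of partMap
  have hEsurj : ∀ ε : B.E, ∃ p, f.partMap p = Sum.inr ε := by
    intro ε
    by_contra hno
    push_neg at hno
    have hcomp : (doubleIncl B ε).comp f = (doubleIncl' B ε).comp f := by
      ext p
      · show (doubleIncl B ε).partMap (f.partMap p) = (doubleIncl' B ε).partMap (f.partMap p)
        cases hq : f.partMap p with
        | inl w => rfl
        | inr e =>
          have : e ≠ ε := fun h => hno p (by rw [hq, h])
          simp only [doubleIncl, doubleIncl']
          erw [Sum.elim_inr, Sum.elim_inr]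
          simp [this]
      · rfl
    have := hepi _ _ _ hcomp
    have := congrArg (fun g => g.partMap (Sum.inr ε)) this
    simp only [doubleIncl, doubleIncl'] at this
    erw [Sum.elim_inr, Sum.elim_inr] at this
    simp at this
    cases this
  have hPsurj : Function.Surjective f.partMap := by
    intro q
    cases q with
    | inl w =>
      obtain ⟨v, hv⟩ := hVsurj w
      exact ⟨Sum.inl v, by rw [f.partMap_vert, hv]⟩
    | inr ε => exact hEsurj ε
  -- construct the inverse
  set φ := Function.surjInv hPsurj with hφ
  set ν := Function.surjInv hVsurj with hν
  have hφr : Function.RightInverse φ f.partMap := Function.rightInverse_surjInv hPsurj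
  have hφl : Function.LeftInverse φ f.partMap := Function.leftInverse_surjInv ⟨hPinj, hPsurj⟩
  have hνr : Function.RightInverse ν f.vertMap := Function.rightInverse_surjInv hVsurj
  have hνl : Function.LeftInverse ν f.vertMap := Function.leftInverse_surjInv ⟨hVinj, hVsurj⟩
  refine ⟨⟨φ, ν, ?_, ?_⟩, ?_, ?_⟩
  · intro w
    apply hPinj
    rw [hφr, f.partMap_vert, hνr]
  · intro q
    have h1 : B.incid q = (A.incid (φ q)).map f.vertMap := by
      conv_lhs => rw [← hφr q]
      exact f.incid_partMap (φ q)
    rw [h1, Sym2.map_map]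
    have : ν ∘ f.vertMap = _root_.id := funext hνl
    rw [this, Sym2.map_id]; rfl
  · ext p
    · exact hφl p
    · exact hνl _
  · ext q
    · exact hφr q
    · exact hνr _
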